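/- Let (M, μ) be a measure space, let H be a separable complex Hilbert space, and let q : M → B(H) be a map such that each q(x) is a rank-one orthogonal projection and q is weakly overcomplete: for all v, w ∈ H the function x ↦ ⟨v, q(x)w⟩ is μ-integrable and ∫_M ⟨v, q(x)w⟩ dμ(x) = ⟨v, w⟩. Then μ(M) is finite if and only if H is finite-dimensional; in that case μ(M) equals the complex dimension of H, and if H is infinite-dimensional then μ(M) = ∞. -/

import Mathlib

open MeasureTheory
open scoped InnerProductSpace

private lemma inner_q_self_aux {H : Type*} [NormedAddCommGroup H] [InnerProductSpace ℂ H]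
    (u v : H) : ⟪v, (⟪u, v⟫_ℂ • u : H)⟫_ℂ = (‖⟪u, v⟫_ℂ‖ : ℂ) ^ 2 := by
  rw [inner_smul_right, ← inner_conj_symm v u, RCLike.mul_conj]
  norm_cast

/-- If `q : M → B(H)` is a weakly overcomplete family of rank-one
orthogonal projections on a separable complex Hilbert space `H`, indexed by a measure
space `(M, μ)`, then `μ(M)` is finite iff `H` is finite dimensional; in that case
`μ(M) = dim_ℂ H`, and if `H` is infinite dimensional then `μ(M) = ∞`. -/
theorem measure_univ_eq_dim_of_overcomplete
    {M : Type*} [MeasurableSpace M] (μ : Measure M)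
    {H : Type*} [NormedAddCommGroup H] [InnerProductSpace ℂ H] [CompleteSpace H]
    [TopologicalSpace.SeparableSpace H]
    (q : M → (H →L[ℂ] H))
    (hq_rank1 : ∀ x, ∃ u : H, ‖u‖ = 1 ∧ ∀ v, q x v = ⟪u, v⟫_ℂ • u)
    (hq_int : ∀ v w : H, Integrable (fun x => ⟪v, q x w⟫_ℂ) μ)
    (hq_over : ∀ v w : H, ∫ x, ⟪v, q x w⟫_ℂ ∂μ = ⟪v, w⟫_ℂ) :
    (μ Set.univ < ⊤ ↔ FiniteDimensional ℂ H) ∧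
    (FiniteDimensional ℂ H → μ Set.univ = (Module.finrank ℂ H : ENNReal)) ∧
    (¬ FiniteDimensional ℂ H → μ Set.univ = ⊤) := by
  classical
  have hfin : FiniteDimensional ℂ H → μ Set.univ = (Module.finrank ℂ H : ENNReal) := by
    intro hFD
    set n := Module.finrank ℂ H with hn
    let b := stdOrthonormalBasis ℂ H
    have hsum1 : ∀ x, (∑ i, ⟪b i, q x (b i)⟫_ℂ) = 1 := by
      intro x
      obtain ⟨u, hu, hquv⟩ := hq_rank1 x
      have h1 : ∀ i, ⟪b i, q x (b i)⟫_ℂ = ⟪u, b i⟫_ℂ * ⟪b i, u⟫_ℂ := by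
        intro i; rw [hquv, inner_smul_right]
      simp_rw [h1]
      rw [b.sum_inner_mul_inner u u, inner_self_eq_norm_sq_to_K, hu]
      norm_num
    have hint : Integrable (fun x => ∑ i, ⟪b i, q x (b i)⟫_ℂ) μ :=
      integrable_finset_sum _ fun i _ => hq_int _ _
    have hconst : Integrable (fun _ : M => (1 : ℂ)) μ := by
      refine hint.congr ?_
      filter_upwards with x using (hsum1 x)
    have hμfin : μ Set.univ < ⊤ := by
      rcases integrable_const_iff.mp hconst with h | h
      · exact absurd h one_ne_zero
      · exact h.measure_univ_lt_top
    have hval : ∫ x, ∑ i, ⟪b i, q x (b i)⟫_ℂ ∂μ = (n : ℂ) := by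
      rw [integral_finset_sum _ (fun i _ => hq_int _ _)]
      have h2 : ∀ i, ⟪b i, b i⟫_ℂ = 1 := by
        intro i
        rw [inner_self_eq_norm_sq_to_K, b.orthonormal.1 i]
        norm_num
      simp_rw [hq_over, h2]
      simp
      exact hn.symm
    have hval2 : ∫ x, ∑ i, ⟪b i, q x (b i)⟫_ℂ ∂μ = ((μ Set.univ).toReal : ℂ) := by
      simp_rw [hsum1]
      rw [integral_const]
      simp
      rfl
    have htr : (μ Set.univ).toReal = (n : ℝ) := by
      have : ((μ Set.univ).toReal : ℂ) = (n : ℂ) := by rw [← hval2, hval]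
      exact_mod_cast this
    rw [← ENNReal.ofReal_toReal hμfin.ne, htr]
    simp
  have hinf : ¬ FiniteDimensional ℂ H → μ Set.univ = ⊤ := by
    intro hFD
    by_contra hμ
    have hμ' : μ Set.univ < ⊤ := lt_top_iff_ne_top.mpr hμ
    obtain ⟨w, b, hb⟩ := exists_hilbertBasis ℂ H
    have horth : Orthonormal ℂ ((↑) : w → H) := hb ▸ b.orthonormal
    have hwinf : Infinite w := by
      rw [Set.infinite_coe_iff]
      by_contra hfinw
      rw [Set.not_infinite] at hfinw
      have hFDspan : FiniteDimensional ℂ (Submodule.span ℂ w) :=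
        FiniteDimensional.span_of_finite ℂ hfinw
      have hclosed : IsClosed (Submodule.span ℂ w : Set H) :=
        Submodule.closed_of_finiteDimensional _
      have hd := b.dense_span
      rw [hb, Subtype.range_coe] at hd
      have htop : Submodule.span ℂ w = ⊤ := by
        rw [← hd]
        exact (IsClosed.submodule_topologicalClosure_eq hclosed).symm
      have htopfd : FiniteDimensional ℂ (⊤ : Submodule ℂ H) := htop ▸ hFDspan
      exact hFD (Submodule.topEquiv.finiteDimensional)
    obtain ⟨N, hN⟩ := exists_nat_gt (μ Set.univ).toReal
    obtain ⟨s, hs⟩ := Infinite.exists_subset_card_eq w N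
    set f : w → M → ℝ := fun i x => (⟪(i : H), q x (i : H)⟫_ℂ).re with hf
    have hfint : ∀ i, Integrable (f i) μ := fun i => (hq_int _ _).re
    have hf1 : ∀ i : w, ∫ x, f i x ∂μ = 1 := by
      intro i
      have : ∫ x, f i x ∂μ = (∫ x, ⟪(i : H), q x (i : H)⟫_ℂ ∂μ).re :=
        integral_re (hq_int _ _)
      rw [this, hq_over, inner_self_eq_norm_sq_to_K, horth.1 i]
      norm_num
    have hfbound : ∀ x, ∑ i ∈ s, f i x ≤ 1 := by
      intro x
      obtain ⟨u, hu, hquv⟩ := hq_rank1 x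
      have h1 : ∀ i : w, f i x = ‖⟪((↑) : w → H) i, u⟫_ℂ‖ ^ 2 := by
        intro i
        rw [hf]
        simp only
        rw [hquv, inner_q_self_aux]
        rw [← norm_inner_symm]
        norm_cast
      calc ∑ i ∈ s, f i x = ∑ i ∈ s, ‖⟪((↑) : w → H) i, u⟫_ℂ‖ ^ 2 := by
            exact Finset.sum_congr rfl fun i _ => h1 i
        _ ≤ ‖u‖ ^ 2 := horth.sum_inner_products_le u
        _ = 1 := by rw [hu]; norm_num
    have hsumint : Integrable (fun x => ∑ i ∈ s, f i x) μ :=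
      integrable_finset_sum s fun i _ => hfint i
    have hNle : (N : ℝ) ≤ (μ Set.univ).toReal := by
      calc (N : ℝ) = ∑ i ∈ s, ∫ x, f i x ∂μ := by
            simp [hf1, hs]
        _ = ∫ x, ∑ i ∈ s, f i x ∂μ := (integral_finset_sum s fun i _ => hfint i).symm
        _ ≤ ∫ _x, (1 : ℝ) ∂μ := by
            refine integral_mono hsumint ?_ hfbound
            exact integrable_const_iff.mpr (Or.inr ⟨hμ'⟩)
        _ = (μ Set.univ).toReal := by simp; rfl
    linarith
  refine ⟨⟨?_, fun h => (hfin h) ▸ ENNReal.natCast_lt_top _⟩, hfin, hinf⟩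
  intro hlt
  by_contra hFD
  exact absurd (hinf hFD) hlt.ne
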